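/- Let C be finitely complete and let a, a' : Γ → E be sections of p : E → Γ. If δ : Δ → Γ and e : I → Γ is the equalizer of a and a', then the pullback of e along δ is an equalizer of the pulled-back sections a[δ], a'[δ] : Δ → δ*(E) (the unique sections of the pullback of p along δ induced by a∘δ and a'∘δ). -/

import Mathlib

open CategoryTheory CategoryTheory.Limits

/-- Stability of extensional identity types under substitution: given sections `a, a'` of
`p : E ⟶ Γ` and `δ : Δ ⟶ Γ`, the pullback along `δ` of the equalizer of `a` and `a'` is an
equalizer of the pulled-back sections `a[δ], a'[δ]` of the pullback of `p` along `δ`. -/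
theorem pullback_of_equalizer_is_equalizer {C : Type*} [Category C] [HasFiniteLimits C]
    {Γ Δ E : C} (p : E ⟶ Γ) (a a' : Γ ⟶ E)
    (ha : a ≫ p = 𝟙 Γ) (ha' : a' ≫ p = 𝟙 Γ) (δ : Δ ⟶ Γ) :
    ∀ {X : C} (f : X ⟶ Δ),
      f ≫ pullback.lift (f := p) (g := δ) (δ ≫ a) (𝟙 Δ) (by simp [ha]) =
          f ≫ pullback.lift (f := p) (g := δ) (δ ≫ a') (𝟙 Δ) (by simp [ha']) ↔
        ∃! g : X ⟶ pullback (equalizer.ι a a') δ,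
          g ≫ pullback.snd (equalizer.ι a a') δ = f := by
  intro X f
  constructor
  · intro h
    have hfa : (f ≫ δ) ≫ a = (f ≫ δ) ≫ a' := by
      have := h =≫ pullback.fst p δ
      simpa [pullback.lift_fst] using this
    refine ⟨pullback.lift (equalizer.lift (f ≫ δ) hfa) f (by simp), by simp [pullback.lift_snd], ?_⟩
    intro g hg
    apply pullback.hom_ext
    · rw [← cancel_mono (equalizer.ι a a')]
      simp [pullback.condition, reassoc_of% hg, pullback.lift_snd_assoc]
    · simpa [pullback.lift_snd] using hg
  · rintro ⟨g, hg, -⟩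
    have hfa : (f ≫ δ) ≫ a = (f ≫ δ) ≫ a' := by
      have : f ≫ δ = g ≫ pullback.fst (equalizer.ι a a') δ ≫ equalizer.ι a a' := by
        rw [pullback.condition, reassoc_of% hg]
      rw [this, Category.assoc, Category.assoc, equalizer.condition]; simp
    apply pullback.hom_ext
    · simpa [pullback.lift_fst] using hfa
    · simp [pullback.lift_snd]
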